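/- Let F : ℝ → ℝ and let φ₁, φ₂ : ℝ → ℝ be differentiable. Define u : {(x₁,x₂) ∈ ℝ² : x₁ + φ₁(x₂) > 0} → ℝ by u(x₁,x₂) = Real.log (x₁ + φ₁(x₂)) + φ₂(x₂). Then at every point (x₁,x₂) of this domain, the equation ∂²u/∂x₂∂x₁ = (∂u/∂x₁)² · F(u + Real.log (∂u/∂x₁)) holds if and only if φ₁'(x₂) = −F(φ₂(x₂)). -/

import Mathlib

/-- For the ansatz `u(x₁,x₂) = log (x₁ + φ₁ x₂) + φ₂ x₂` on the domain
`x₁ + φ₁ x₂ > 0`, the equation `u_{x₁x₂} = (u_{x₁})² F(u + log u_{x₁})` holds at a point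
iff `φ₁' x₂ = -F (φ₂ x₂)` there. -/
theorem ansatz_reduces_iff
    (F : ℝ → ℝ) (φ₁ φ₂ : ℝ → ℝ)
    (hφ₁ : Differentiable ℝ φ₁) (hφ₂ : Differentiable ℝ φ₂)
    (u : ℝ → ℝ → ℝ)
    (hu : ∀ x₁ x₂ : ℝ, u x₁ x₂ = Real.log (x₁ + φ₁ x₂) + φ₂ x₂) :
    ∀ x₁ x₂ : ℝ, 0 < x₁ + φ₁ x₂ →
      (deriv (fun t => deriv (fun s => u s t) x₁) x₂ =
          (deriv (fun s => u s x₂) x₁) ^ 2 *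
            F (u x₁ x₂ + Real.log (deriv (fun s => u s x₂) x₁)) ↔
        deriv φ₁ x₂ = -F (φ₂ x₂)) := by
  intro x₁ x₂ hpos
  set A := x₁ + φ₁ x₂ with hA
  have hAne : A ≠ 0 := ne_of_gt hpos
  -- inner derivative at any t with positivity
  have hinner : ∀ t : ℝ, 0 < x₁ + φ₁ t →
      deriv (fun s => u s t) x₁ = (x₁ + φ₁ t)⁻¹ := by
    intro t ht
    have h1 : HasDerivAt (fun s : ℝ => Real.log (s + φ₁ t) + φ₂ t)
        ((x₁ + φ₁ t)⁻¹) x₁ := by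
      have := ((Real.hasDerivAt_log (ne_of_gt ht)).comp x₁
        ((hasDerivAt_id x₁).add_const (φ₁ t))).add_const (φ₂ t)
      simpa using this
    have : (fun s => u s t) = fun s : ℝ => Real.log (s + φ₁ t) + φ₂ t := by
      funext s; exact hu s t
    rw [this, h1.deriv]
  -- eventual equality near x₂
  have hcont : ContinuousAt (fun t => x₁ + φ₁ t) x₂ :=
    (continuous_const.add hφ₁.continuous).continuousAt
  have hev : (fun t => deriv (fun s => u s t) x₁) =ᶠ[nhds x₂]
      fun t => (x₁ + φ₁ t)⁻¹ := by
    have hpos' : ∀ᶠ t in nhds x₂, 0 < x₁ + φ₁ t :=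
      hcont.eventually (eventually_gt_nhds hpos)
    filter_upwards [hpos'] with t ht using hinner t ht
  -- outer derivative
  have h2 : HasDerivAt (fun t => (x₁ + φ₁ t)⁻¹)
      (-(deriv φ₁ x₂) / A ^ 2) x₂ := by
    have := ((hasDerivAt_const x₂ x₁).add (hφ₁ x₂).hasDerivAt).inv hAne
    exact this.congr_deriv (by simp [hA])
  have houter : deriv (fun t => deriv (fun s => u s t) x₁) x₂ =
      -(deriv φ₁ x₂) / A ^ 2 := by
    rw [hev.deriv_eq, h2.deriv]
  have hin : deriv (fun s => u s x₂) x₁ = A⁻¹ := hinner x₂ hpos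
  have harg : u x₁ x₂ + Real.log (deriv (fun s => u s x₂) x₁) = φ₂ x₂ := by
    rw [hin, Real.log_inv, hu]; ring
  rw [houter, harg, hin]
  constructor
  · intro h
    have hA2 : A ^ 2 ≠ 0 := pow_ne_zero 2 hAne
    field_simp at h
    have h' : -deriv φ₁ x₂ = F (φ₂ x₂) :=
      mul_right_cancel₀ hA2 (by linear_combination A ^ 2 * h)
    linarith
  · intro h
    rw [h]
    field_simp
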